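/- Let r_K > 0. If K₁ and K₂ are two solutions of dK/dt = r_K·(K_max − K) subject to the same impulses ΔK(nτ) = −γ₀·K(nτ) (i.e., both are multiplied by (1 − γ₀) at times nτ), then y = K₁ − K₂ satisfies |y(t)| ≤ |y(0)|·e^{−r_K·t}·(1 − γ₀)^{⌊t/τ⌋} for all t ≥ 0; in particular y(t) → 0 as t → ∞. Hence K_per attracts all solutions. -/

import Mathlib

open Filter Set Topology

/-- Contraction between two solutions of the impulsive equation
`dK/dt = r_K(K_max - K)`, `ΔK(nτ) = -γ₀ K(nτ)`: the difference `y = K₁ - K₂` satisfies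
`|y(t)| ≤ |y(0)| e^{-r_K t} (1-γ₀)^⌊t/τ⌋` for `t ≥ 0`, and tends to `0`;
hence the periodic equilibrium attracts all solutions. -/
theorem impulsive_solutions_contract
    (rK τ γ0 Kmax : ℝ)
    (hrK : 0 < rK) (hτ : 0 < τ) (hγ0 : 0 < γ0) (hγ1 : γ0 < 1) (hK : 0 < Kmax)
    (K₁ K₂ : ℝ → ℝ)
    (hode : ∀ K ∈ ({K₁, K₂} : Set (ℝ → ℝ)),
      (∀ n : ℕ, ∀ t ∈ Ioo ((n : ℝ) * τ) (((n : ℝ) + 1) * τ),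
          HasDerivAt K (rK * (Kmax - K t)) t) ∧
      (∀ n : ℕ, ContinuousOn K (Ico ((n : ℝ) * τ) (((n : ℝ) + 1) * τ))) ∧
      (∀ n : ℕ, 1 ≤ n → ∃ l : ℝ,
          Tendsto K (nhdsWithin ((n : ℝ) * τ) (Iio ((n : ℝ) * τ))) (nhds l) ∧
          K ((n : ℝ) * τ) = (1 - γ0) * l)) :
    (∀ t : ℝ, 0 ≤ t →
        |K₁ t - K₂ t| ≤ |K₁ 0 - K₂ 0| * Real.exp (-rK * t) * (1 - γ0) ^ (⌊t / τ⌋.toNat)) ∧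
    Tendsto (fun t => K₁ t - K₂ t) atTop (nhds 0) := by
  obtain ⟨hd₁, hc₁, hl₁⟩ := hode K₁ (by simp)
  obtain ⟨hd₂, hc₂, hl₂⟩ := hode K₂ (by simp)
  set y : ℝ → ℝ := fun t => K₁ t - K₂ t with hy
  -- y has derivative -rK * y on each open interval
  have hdy : ∀ n : ℕ, ∀ t ∈ Ioo ((n : ℝ) * τ) (((n : ℝ) + 1) * τ),
      HasDerivAt y (-rK * y t) t := by
    intro n t ht
    have := (hd₁ n t ht).sub (hd₂ n t ht)
    refine this.congr_deriv ?_
    simp only [hy]; ring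
  have hcy : ∀ n : ℕ, ContinuousOn y (Ico ((n : ℝ) * τ) (((n : ℝ) + 1) * τ)) :=
    fun n => (hc₁ n).sub (hc₂ n)
  -- g = y * exp(rK t) is constant on each Ico
  set g : ℝ → ℝ := fun t => y t * Real.exp (rK * t) with hg
  have hE : ∀ t : ℝ, HasDerivAt (fun s => Real.exp (rK * s)) (rK * Real.exp (rK * t)) t := by
    intro t
    have := ((hasDerivAt_id t).const_mul rK).exp
    simpa [mul_comm] using this
  have hdg : ∀ n : ℕ, ∀ t ∈ Ioo ((n : ℝ) * τ) (((n : ℝ) + 1) * τ),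
      HasDerivAt g 0 t := by
    intro n t ht
    have := (hdy n t ht).mul (hE t)
    refine this.congr_deriv ?_
    ring
  have hcg : ∀ n : ℕ, ContinuousOn g (Ico ((n : ℝ) * τ) (((n : ℝ) + 1) * τ)) := by
    intro n
    exact (hcy n).mul ((Real.continuous_exp.comp (continuous_const.mul continuous_id)).continuousOn)
  have hnτ : ∀ n : ℕ, (n : ℝ) * τ < ((n : ℝ) + 1) * τ := by
    intro n; nlinarith
  -- g constant on Ioo
  have hconstIoo : ∀ n : ℕ, ∀ s ∈ Ioo ((n : ℝ) * τ) (((n : ℝ) + 1) * τ),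
      ∀ t ∈ Ioo ((n : ℝ) * τ) (((n : ℝ) + 1) * τ), s ≤ t → g t = g s := by
    intro n s hs t ht hst
    have hsub : Icc s t ⊆ Ioo ((n : ℝ) * τ) (((n : ℝ) + 1) * τ) :=
      fun x hx => ⟨lt_of_lt_of_le hs.1 hx.1, lt_of_le_of_lt hx.2 ht.2⟩
    have hsub' : Icc s t ⊆ Ico ((n : ℝ) * τ) (((n : ℝ) + 1) * τ) :=
      fun x hx => ⟨(hsub hx).1.le, (hsub hx).2⟩
    exact constant_of_has_deriv_right_zero ((hcg n).mono hsub')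
      (fun x hx => ((hdg n x (hsub ⟨hx.1, hx.2.le⟩)).hasDerivWithinAt)) t ⟨hst, le_refl t⟩
  -- g equals its value at the left endpoint on all of Ico
  have hconst : ∀ n : ℕ, ∀ t ∈ Ico ((n : ℝ) * τ) (((n : ℝ) + 1) * τ),
      g t = g ((n : ℝ) * τ) := by
    intro n t ht
    rcases eq_or_lt_of_le ht.1 with h | h
    · rw [← h]
    have hne : NeBot (𝓝[Ioo ((n : ℝ) * τ) t] ((n : ℝ) * τ)) :=
      left_nhdsWithin_Ioo_neBot h
    have h1 : Tendsto g (𝓝[Ioo ((n : ℝ) * τ) t] ((n : ℝ) * τ)) (𝓝 (g t)) := by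
      apply tendsto_nhds_of_eventually_eq
      filter_upwards [self_mem_nhdsWithin] with s hs
      exact (hconstIoo n s ⟨hs.1, lt_trans hs.2 ht.2⟩ t ⟨h, ht.2⟩ hs.2.le).symm
    have h2 : Tendsto g (𝓝[Ioo ((n : ℝ) * τ) t] ((n : ℝ) * τ)) (𝓝 (g ((n : ℝ) * τ))) := by
      have := (hcg n ((n : ℝ) * τ) ⟨le_refl _, hnτ n⟩)
      exact this.tendsto.mono_left (nhdsWithin_mono _
        (show Ioo ((n : ℝ) * τ) t ⊆ Ico ((n : ℝ) * τ) (((n : ℝ) + 1) * τ) from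
          fun x hx => ⟨hx.1.le, lt_trans hx.2 ht.2⟩))
    exact tendsto_nhds_unique h1 h2
  -- hence y t = y(nτ) * exp(-rK (t - nτ)) on Ico
  have hform : ∀ n : ℕ, ∀ t ∈ Ico ((n : ℝ) * τ) (((n : ℝ) + 1) * τ),
      y t = y ((n : ℝ) * τ) * Real.exp (-rK * (t - (n : ℝ) * τ)) := by
    intro n t ht
    have h := hconst n t ht
    have hexp : Real.exp (rK * t) ≠ 0 := Real.exp_ne_zero _
    simp only [hg] at h
    rw [show -rK * (t - (n : ℝ) * τ) = rK * ((n : ℝ) * τ) - rK * t by ring, Real.exp_sub]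
    rw [← mul_div_assoc, eq_div_iff hexp]
    linarith [h]
  -- jump relation: y((n+1)τ) = (1-γ0) * y(nτ) * exp(-rK τ)
  have hjump : ∀ n : ℕ, y (((n : ℝ) + 1) * τ)
      = (1 - γ0) * (y ((n : ℝ) * τ) * Real.exp (-rK * τ)) := by
    intro n
    obtain ⟨l₁, hl₁t, hl₁e⟩ := hl₁ (n + 1) (Nat.le_add_left 1 n)
    obtain ⟨l₂, hl₂t, hl₂e⟩ := hl₂ (n + 1) (Nat.le_add_left 1 n)
    have hcast : ((n + 1 : ℕ) : ℝ) = (n : ℝ) + 1 := by push_cast; ring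
    rw [hcast] at hl₁t hl₂t hl₁e hl₂e
    -- y tends to l₁ - l₂ from the left
    have hA : Tendsto y (𝓝[<] (((n : ℝ) + 1) * τ)) (𝓝 (l₁ - l₂)) := hl₁t.sub hl₂t
    -- y also tends to y(nτ) exp(-rK τ) from the left
    have hB : Tendsto y (𝓝[<] (((n : ℝ) + 1) * τ))
        (𝓝 (y ((n : ℝ) * τ) * Real.exp (-rK * τ))) := by
      have hcont : Tendsto (fun t => y ((n : ℝ) * τ) * Real.exp (-rK * (t - (n : ℝ) * τ)))
          (𝓝[<] (((n : ℝ) + 1) * τ)) (𝓝 (y ((n : ℝ) * τ) * Real.exp (-rK * τ))) := by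
        have hC : ContinuousAt (fun t : ℝ => y ((n : ℝ) * τ) * Real.exp (-rK * (t - (n : ℝ) * τ)))
            (((n : ℝ) + 1) * τ) := by fun_prop
        have h2 : Tendsto (fun t : ℝ => y ((n : ℝ) * τ) * Real.exp (-rK * (t - (n : ℝ) * τ)))
            (𝓝[<] (((n : ℝ) + 1) * τ))
            (𝓝 (y ((n : ℝ) * τ) * Real.exp (-rK * ((((n : ℝ) + 1) * τ) - (n : ℝ) * τ)))) :=
          hC.tendsto.mono_left nhdsWithin_le_nhds
        rw [show (((n:ℝ)+1)*τ - (n:ℝ)*τ) = τ by ring] at h2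
        exact h2
      apply Tendsto.congr' _ hcont
      filter_upwards [Ioo_mem_nhdsLT_of_mem ⟨hnτ n, le_refl _⟩] with s hs
      exact (hform n s ⟨hs.1.le, hs.2⟩).symm
    have hne : NeBot (𝓝[<] (((n : ℝ) + 1) * τ)) := by infer_instance
    have huniq : l₁ - l₂ = y ((n : ℝ) * τ) * Real.exp (-rK * τ) :=
      tendsto_nhds_unique hA hB
    have : y (((n : ℝ) + 1) * τ) = (1 - γ0) * (l₁ - l₂) := by
      simp only [hy]; rw [hl₁e, hl₂e]; ring
    rw [this, huniq]
  -- closed formula at grid points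
  have hgrid : ∀ n : ℕ, y ((n : ℝ) * τ)
      = y 0 * Real.exp (-rK * ((n : ℝ) * τ)) * (1 - γ0) ^ n := by
    intro n
    induction n with
    | zero => simp
    | succ n ih =>
      have hcast : ((n + 1 : ℕ) : ℝ) = (n : ℝ) + 1 := by push_cast; ring
      rw [hcast, hjump n, ih,
        show -rK * (((n : ℝ) + 1) * τ) = -rK * ((n : ℝ) * τ) + -rK * τ by ring,
        Real.exp_add, pow_succ]
      ring
  have hmain : ∀ t : ℝ, 0 ≤ t →
      |y t| ≤ |y 0| * Real.exp (-rK * t) * (1 - γ0) ^ (⌊t / τ⌋.toNat) := by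
    intro t ht
    set n : ℕ := (⌊t / τ⌋).toNat with hn
    have hfl : (0 : ℤ) ≤ ⌊t / τ⌋ := Int.floor_nonneg.2 (div_nonneg ht hτ.le)
    have hncast : ((n : ℤ) : ℝ) = ((⌊t / τ⌋ : ℤ) : ℝ) := by
      rw [hn]; norm_cast; exact Int.toNat_of_nonneg hfl
    have hmem : t ∈ Ico ((n : ℝ) * τ) (((n : ℝ) + 1) * τ) := by
      constructor
      · have h0 := Int.floor_le (t / τ)
        have h1 : (n : ℝ) ≤ t / τ := by
          rw [show ((n:ℕ):ℝ) = ((n:ℤ):ℝ) by norm_cast, hncast]; exact h0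
        calc (n : ℝ) * τ ≤ (t / τ) * τ := by nlinarith
          _ = t := by field_simp
      · have h0 := Int.lt_floor_add_one (t / τ)
        have h1 : t / τ < (n : ℝ) + 1 := by
          rw [show ((n:ℕ):ℝ) = ((n:ℤ):ℝ) by norm_cast, hncast]; exact_mod_cast h0
        calc t = (t / τ) * τ := by field_simp
          _ < ((n : ℝ) + 1) * τ := by nlinarith
    rw [hform n t hmem, hgrid n]
    have heq : y 0 * Real.exp (-rK * ((n : ℝ) * τ)) * (1 - γ0) ^ n
        * Real.exp (-rK * (t - (n : ℝ) * τ))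
        = y 0 * Real.exp (-rK * t) * (1 - γ0) ^ n := by
      rw [show -rK * t = -rK * ((n:ℝ)*τ) + -rK * (t - (n:ℝ)*τ) by ring, Real.exp_add]
      ring
    rw [heq]
    have hpos : (0:ℝ) < 1 - γ0 := by linarith
    rw [abs_mul, abs_mul, abs_of_pos (pow_pos hpos n), abs_of_pos (Real.exp_pos _)]
  refine ⟨hmain, ?_⟩
  rw [tendsto_zero_iff_abs_tendsto_zero]
  have hpos : (0:ℝ) < 1 - γ0 := by linarith
  apply squeeze_zero' (Eventually.of_forall fun t => abs_nonneg _)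
    (g := fun t => |y 0| * Real.exp (-rK * t))
  · filter_upwards [eventually_ge_atTop (0:ℝ)] with t ht
    calc |y t| ≤ |y 0| * Real.exp (-rK * t) * (1 - γ0) ^ (⌊t / τ⌋.toNat) := hmain t ht
      _ ≤ |y 0| * Real.exp (-rK * t) * 1 := by
          apply mul_le_mul_of_nonneg_left
          · exact pow_le_one₀ hpos.le (by linarith)
          · positivity
      _ = |y 0| * Real.exp (-rK * t) := by ring
  · have h1 : Tendsto (fun t : ℝ => rK * t) atTop atTop :=
      Tendsto.const_mul_atTop hrK tendsto_id
    have h2 : Tendsto (fun t : ℝ => Real.exp (-rK * t)) atTop (𝓝 0) := by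
      have h := Real.tendsto_exp_neg_atTop_nhds_zero.comp h1
      have he : (fun t : ℝ => Real.exp (-rK * t))
          = (fun x : ℝ => Real.exp (-x)) ∘ fun t : ℝ => rK * t := by
        funext t; simp [Function.comp, neg_mul]
      rw [he]; exact h
    simpa using h2.const_mul (|y 0|)
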